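/- For t ≥ 2, every (non-empty) graph with average degree at least 2^{t−2} contains a dominating K_t-model. -/

import Mathlib

/-- A *dominating K_t-model* in a graph G is a sequence (T 0, ..., T (t-1)) of pairwise
disjoint non-empty connected subgraphs of G such that for all i < j, every vertex of T j
has a neighbour (in G) in T i. -/
def SimpleGraph.IsDomKtModel {V : Type*} (G : SimpleGraph V) (t : ℕ) (T : Fin t → Set V) : Prop :=
  (∀ i, (T i).Nonempty) ∧
  (Pairwise fun i j => Disjoint (T i) (T j)) ∧
  (∀ i, (G.induce (T i)).Connected) ∧
  (∀ i j : Fin t, i < j → ∀ v ∈ T j, ∃ u ∈ T i, G.Adj v u)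

/-- G contains a dominating K_t-model. -/
def SimpleGraph.HasDomKtModel {V : Type*} (G : SimpleGraph V) (t : ℕ) : Prop :=
  ∃ T : Fin t → Set V, G.IsDomKtModel t T

namespace DomKtAux

open Finset

set_option linter.unusedSectionVars false
set_option maxHeartbeats 1000000

variable {V : Type*} [Fintype V] [DecidableEq V] (G : SimpleGraph V) [DecidableRel G.Adj]

/-- twice the number of edges of `G` inside `A`. -/
def dm (A : Finset V) : ℕ := ∑ u ∈ A, (G.neighborFinset u ∩ A).card

lemma inter_card_split (T A : Finset V) {v : V} (hv : v ∈ A) :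
    (T ∩ A).card = (T ∩ A.erase v).card + (if v ∈ T then 1 else 0) := by
  by_cases hT : v ∈ T
  · have h1 : T ∩ A = insert v (T ∩ A.erase v) := by
      conv_lhs => rw [← Finset.insert_erase hv]
      rw [Finset.inter_comm, Finset.insert_inter_of_mem hT, Finset.inter_comm]
    rw [h1, Finset.card_insert_of_notMem (by simp), if_pos hT]
  · have h1 : T ∩ A = T ∩ A.erase v := by
      ext x
      simp only [Finset.mem_inter, Finset.mem_erase]
      exact ⟨fun ⟨hx, hxA⟩ => ⟨hx, ⟨fun h => hT (h ▸ hx), hxA⟩⟩, fun ⟨hx, _, hxA⟩ => ⟨hx, hxA⟩⟩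
    rw [h1, if_neg hT, add_zero]

lemma neighbor_inter_erase (v : V) (A : Finset V) :
    G.neighborFinset v ∩ A.erase v = G.neighborFinset v ∩ A := by
  ext x
  simp only [Finset.mem_inter, SimpleGraph.mem_neighborFinset, Finset.mem_erase]
  exact ⟨fun ⟨h, _, hA⟩ => ⟨h, hA⟩, fun ⟨h, hA⟩ => ⟨h, (G.ne_of_adj h).symm, hA⟩⟩

lemma dm_erase {A : Finset V} {v : V} (hv : v ∈ A) :
    dm G A = dm G (A.erase v) + 2 * (G.neighborFinset v ∩ A).card := by
  have h0 : dm G A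
      = (G.neighborFinset v ∩ A).card + ∑ u ∈ A.erase v, (G.neighborFinset u ∩ A).card :=
    (Finset.add_sum_erase A _ hv).symm
  have h1 : ∑ u ∈ A.erase v, (G.neighborFinset u ∩ A).card
      = dm G (A.erase v) + ∑ u ∈ A.erase v, (if v ∈ G.neighborFinset u then 1 else 0) := by
    rw [dm, ← Finset.sum_add_distrib]
    exact Finset.sum_congr rfl fun u _ => inter_card_split _ _ hv
  have h2 : ∑ u ∈ A.erase v, (if v ∈ G.neighborFinset u then 1 else 0)
      = (G.neighborFinset v ∩ A).card := by
    rw [← Finset.card_filter]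
    rw [← neighbor_inter_erase]
    congr 1
    ext x
    simp only [Finset.mem_filter, Finset.mem_inter, SimpleGraph.mem_neighborFinset,
      Finset.mem_erase]
    constructor
    · rintro ⟨hx, h⟩
      exact ⟨h.symm, hx⟩
    · rintro ⟨h, hx⟩
      exact ⟨hx, h.symm⟩
  omega

lemma singleton_connected (v : V) : (G.induce ({v} : Set V)).Connected := by
  rw [SimpleGraph.connected_iff]
  refine ⟨fun a b => ?_, ⟨⟨v, rfl⟩⟩⟩
  have : a = b := Subtype.ext (a.2.trans b.2.symm)
  rw [this]

lemma connected_insert {S : Set V} (hS : (G.induce S).Connected) {u v : V}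
    (hu : u ∈ S) (ha : G.Adj u v) : (G.induce (insert v S)).Connected := by
  have h := SimpleGraph.connected_induce_union hS.preconnected (singleton_connected G v).preconnected hu rfl ha
  rwa [Set.union_singleton] at h

/-- The key density lemma: if `A` carries at least `c·|A|` edges then there is a connected
set `S` and a nonempty set `B` of vertices, each adjacent to `S`, spanning at least
`c/2·|B|` edges. -/
lemma lemD (c : ℕ) (hc : 1 ≤ c) :
    ∀ A : Finset V, A.Nonempty → 2 * c * A.card ≤ dm G A →
    ∃ S B : Finset V, S ⊆ A ∧ B ⊆ A ∧ S.Nonempty ∧ B.Nonempty ∧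
      (G.induce (S : Set V)).Connected ∧ Disjoint S B ∧
      (∀ v ∈ B, ∃ u ∈ S, G.Adj v u) ∧ c * B.card ≤ dm G B := by
  intro A
  induction A using Finset.strongInduction with
  | _ A ih =>
  intro hA hAd
  -- the candidate predicate
  set cand : Finset V → Prop := fun S =>
    S.Nonempty ∧ S ⊆ A ∧ (G.induce (S : Set V)).Connected ∧
      2 * c * ((A \ S).card + 1)
        ≤ dm G (A \ S) + 2 * ((A \ S).filter (fun w => ∃ u ∈ S, G.Adj w u)).card with hcand
  -- a singleton is a candidate
  obtain ⟨v, hv⟩ := hA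
  have hsingle : cand {v} := by
    refine ⟨Finset.singleton_nonempty v, Finset.singleton_subset_iff.2 hv, by
      rw [Finset.coe_singleton]; exact singleton_connected G v, ?_⟩
    have e1 : A \ {v} = A.erase v := by rw [← Finset.erase_eq]
    have e2 : (A.erase v).card + 1 = A.card := Finset.card_erase_add_one hv
    have e3 : (A.erase v).filter (fun w => ∃ u ∈ ({v} : Finset V), G.Adj w u)
        = G.neighborFinset v ∩ A.erase v := by
      ext x
      simp only [Finset.mem_filter, Finset.mem_singleton, exists_eq_left, Finset.mem_inter,
        SimpleGraph.mem_neighborFinset]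
      constructor
      · rintro ⟨hx, h⟩; exact ⟨h.symm, hx⟩
      · rintro ⟨h, hx⟩; exact ⟨hx, h.symm⟩
    rw [e1, e2, e3, neighbor_inter_erase, ← dm_erase G hv]
    exact hAd
  -- pick a candidate of maximal size
  obtain ⟨S, hS, hmax⟩ := Set.Finite.exists_maximalFor Finset.card {S | cand S}
    (Set.toFinite _) ⟨{v}, hsingle⟩
  obtain ⟨hSne, hSA, hScon, hSineq⟩ := hS
  set X := A \ S with hX
  set B := X.filter (fun w => ∃ u ∈ S, G.Adj w u) with hBdef
  rcases B.eq_empty_or_nonempty with hB | hB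
  · -- no boundary : S is a full union of components, recurse on X
    rw [hB] at hSineq
    simp only [Finset.card_empty, mul_zero, add_zero] at hSineq
    have hXne : X.Nonempty := by
      rcases X.eq_empty_or_nonempty with h | h
      · exfalso
        rw [h] at hSineq
        simp only [Finset.card_empty, dm, Finset.sum_empty] at hSineq
        omega
      · exact h
    have hXss : X ⊂ A := Finset.sdiff_ssubset hSA hSne
    have hXd : 2 * c * X.card ≤ dm G X := by
      refine le_trans ?_ hSineq
      exact Nat.mul_le_mul_left _ (Nat.le_succ _)
    obtain ⟨S', B', h1, h2, h3⟩ := ih X hXss hXne hXd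
    exact ⟨S', B', h1.trans (Finset.sdiff_subset), h2.trans (Finset.sdiff_subset), h3⟩
  · -- nonempty boundary: the minimum degree inside B is at least c
    have hdeg : ∀ u ∈ B, c ≤ (G.neighborFinset u ∩ B).card := by
      intro u hu
      have huX : u ∈ X := (Finset.mem_filter.1 hu).1
      have huadj : ∃ w ∈ S, G.Adj u w := (Finset.mem_filter.1 hu).2
      have huA : u ∈ A := (Finset.mem_sdiff.1 huX).1
      have huS : u ∉ S := (Finset.mem_sdiff.1 huX).2
      obtain ⟨w, hwS, hwadj⟩ := huadj
      -- insert u S is connected, nonempty, ⊆ A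
      have hcon' : (G.induce ((insert u S : Finset V) : Set V)).Connected := by
        rw [Finset.coe_insert]
        exact connected_insert G hScon hwS hwadj.symm
      -- it cannot be a candidate, by maximality of S
      have hnotcand : ¬ cand (insert u S) := by
        intro hcand'
        have h1 := hmax hcand' (Finset.card_le_card (Finset.subset_insert u S))
        rw [Finset.card_insert_of_notMem huS] at h1
        omega
      have hfail : ¬ (2 * c * ((A \ insert u S).card + 1)
          ≤ dm G (A \ insert u S)
            + 2 * ((A \ insert u S).filter (fun w => ∃ z ∈ insert u S, G.Adj w z)).card) := by
        intro hineq
        exact hnotcand ⟨Finset.insert_nonempty u S, Finset.insert_subset huA hSA, hcon', hineq⟩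
      rw [not_le] at hfail
      -- identities
      have e1 : A \ insert u S = X.erase u := by
        ext x
        simp only [Finset.mem_sdiff, Finset.mem_insert, Finset.mem_erase, hX, not_or]
        tauto
      rw [e1] at hfail
      have e2 : (X.erase u).card + 1 = X.card := Finset.card_erase_add_one huX
      have e3 : dm G X = dm G (X.erase u) + 2 * (G.neighborFinset u ∩ X).card :=
        dm_erase G huX
      set B' := (X.erase u).filter (fun w => ∃ z ∈ insert u S, G.Adj w z) with hB'
      set Ext := (G.neighborFinset u ∩ X) \ B with hExt
      have e4 : B' = B.erase u ∪ Ext := by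
        ext x
        simp only [hB', hExt, hBdef, Finset.mem_filter, Finset.mem_erase, Finset.mem_union,
          Finset.mem_sdiff, Finset.mem_inter, Finset.mem_insert,
          SimpleGraph.mem_neighborFinset]
        constructor
        · rintro ⟨⟨hxu, hxX⟩, z, hz, hadj⟩
          rcases hz with rfl | hzS
          · by_cases hxB : x ∈ X ∧ ∃ u ∈ S, G.Adj x u
            · exact Or.inl ⟨hxu, hxB⟩
            · exact Or.inr ⟨⟨hadj.symm, hxX⟩, by tauto⟩
          · exact Or.inl ⟨hxu, hxX, z, hzS, hadj⟩
        · rintro (⟨hxu, hxX, z, hzS, hadj⟩ | ⟨⟨hadj, hxX⟩, hnB⟩)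
          · exact ⟨⟨hxu, hxX⟩, z, Or.inr hzS, hadj⟩
          · exact ⟨⟨(G.ne_of_adj hadj).symm, hxX⟩, u, Or.inl rfl, hadj.symm⟩
      have e5 : B'.card = (B.erase u).card + Ext.card := by
        rw [e4]
        apply Finset.card_union_of_disjoint
        rw [Finset.disjoint_left]
        intro x hx hx'
        exact (Finset.mem_sdiff.1 hx').2 (Finset.mem_of_mem_erase hx)
      have e6 : (B.erase u).card + 1 = B.card := Finset.card_erase_add_one hu
      have e7 : (G.neighborFinset u ∩ X).card = (G.neighborFinset u ∩ B).card + Ext.card := by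
        have hsub : G.neighborFinset u ∩ B ⊆ G.neighborFinset u ∩ X :=
          Finset.inter_subset_inter le_rfl (Finset.filter_subset _ _)
        have hcards := Finset.card_sdiff_add_card_eq_card hsub
        have e8 : (G.neighborFinset u ∩ X) \ (G.neighborFinset u ∩ B) = Ext := by
          ext x
          simp only [hExt, Finset.mem_sdiff, Finset.mem_inter, not_and]
          constructor
          · rintro ⟨⟨h1, h2⟩, h3⟩
            exact ⟨⟨h1, h2⟩, fun hB => h3 h1 hB⟩
          · rintro ⟨⟨h1, h2⟩, h3⟩
            exact ⟨⟨h1, h2⟩, fun _ => h3⟩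
        rw [e8] at hcards
        omega
      have key : 2 * c * (X.card + 1) ≤ dm G X + 2 * B.card := hSineq
      have keym : 2 * c * (X.card + 1) = 2 * c * X.card + 2 * c := by ring
      have hfailm : dm G (X.erase u) + 2 * B'.card < 2 * c * X.card := by
        have h9 : 2 * c * ((X.erase u).card + 1) = 2 * c * X.card := by rw [e2]
        omega
      rw [keym] at key
      rw [e3, e7] at key
      -- now everything is linear in the atoms of the problem
      generalize 2 * c * X.card = q at key hfailm
      omega
    refine ⟨S, B, hSA, ?_, hSne, hB, hScon, ?_, ?_, ?_⟩
    · exact (Finset.filter_subset _ _).trans (Finset.sdiff_subset)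
    · rw [Finset.disjoint_left]
      intro x hxS hxB
      exact (Finset.mem_sdiff.1 ((Finset.filter_subset _ _) hxB)).2 hxS
    · intro w hw
      obtain ⟨u, huS, hadj⟩ := (Finset.mem_filter.1 hw).2
      exact ⟨u, huS, hadj⟩
    · calc c * B.card = B.card • c := by rw [smul_eq_mul, mul_comm]
        _ ≤ ∑ u ∈ B, (G.neighborFinset u ∩ B).card := Finset.card_nsmul_le_sum B _ c hdeg
        _ = dm G B := rfl

/-- The main induction. -/
lemma aux : ∀ (s : ℕ) (A : Finset V), A.Nonempty → 2 ^ s * A.card ≤ dm G A →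
    ∃ T : Fin (s + 2) → Set V, G.IsDomKtModel (s + 2) T ∧ ∀ i, T i ⊆ ↑A := by
  intro s
  induction s with
  | zero =>
    intro A hA hAd
    simp only [pow_zero, one_mul] at hAd
    have hpos : 0 < dm G A := lt_of_lt_of_le (Finset.card_pos.2 hA) hAd
    obtain ⟨u, huA, hu⟩ : ∃ u ∈ A, (G.neighborFinset u ∩ A).card ≠ 0 := by
      by_contra hcon
      push_neg at hcon
      have : dm G A = 0 := Finset.sum_eq_zero hcon
      omega
    obtain ⟨w, hw⟩ := Finset.card_pos.1 (Nat.pos_of_ne_zero hu)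
    rw [Finset.mem_inter, SimpleGraph.mem_neighborFinset] at hw
    obtain ⟨hadj, hwA⟩ := hw
    refine ⟨![{u}, {w}], ⟨?_, ?_, ?_, ?_⟩, ?_⟩
    · intro i
      fin_cases i <;> simp
    · intro i j hij
      fin_cases i <;> fin_cases j <;> simp_all
      · exact G.ne_of_adj hadj
      · exact fun h => G.ne_of_adj hadj h.symm
    · intro i
      fin_cases i
      · exact singleton_connected G u
      · exact singleton_connected G w
    · intro i j hij x hx
      fin_cases i <;> fin_cases j <;> simp_all
      exact hadj.symm
    · intro i
      fin_cases i <;> simp_all [Set.singleton_subset_iff]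
  | succ s ihs =>
    intro A hA hAd
    have hAd' : 2 * 2 ^ s * A.card ≤ dm G A := by
      rwa [pow_succ, mul_comm (2 ^ s) 2] at hAd
    obtain ⟨S, B, hSA, hBA, hSne, hBne, hScon, hdisj, hdom, hBd⟩ :=
      lemD G (2 ^ s) (Nat.one_le_two_pow) A hA hAd'
    obtain ⟨T', hT', hT'sub⟩ := ihs B hBne hBd
    have hdSB : Disjoint (↑S : Set V) (↑B : Set V) := by
      rw [Finset.disjoint_coe]; exact hdisj
    refine ⟨Fin.cons (↑S) T', ⟨?_, ?_, ?_, ?_⟩, ?_⟩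
    · intro i
      rcases Fin.eq_zero_or_eq_succ i with rfl | ⟨k, rfl⟩
      · rw [Fin.cons_zero]
        exact Finset.coe_nonempty.2 hSne
      · rw [Fin.cons_succ]
        exact hT'.1 k
    · intro i j hij
      rcases Fin.eq_zero_or_eq_succ i with rfl | ⟨k, rfl⟩ <;>
        rcases Fin.eq_zero_or_eq_succ j with rfl | ⟨l, rfl⟩
      · exact absurd rfl hij
      · rw [Fin.cons_zero, Fin.cons_succ]
        exact Set.disjoint_of_subset_right (hT'sub l) hdSB
      · rw [Fin.cons_zero, Fin.cons_succ]
        exact (Set.disjoint_of_subset_right (hT'sub k) hdSB).symm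
      · rw [Fin.cons_succ, Fin.cons_succ]
        exact hT'.2.1 fun h => hij (congrArg Fin.succ h)
    · intro i
      rcases Fin.eq_zero_or_eq_succ i with rfl | ⟨k, rfl⟩
      · rw [Fin.cons_zero]; exact hScon
      · rw [Fin.cons_succ]; exact hT'.2.2.1 k
    · intro i j hij x hx
      rcases Fin.eq_zero_or_eq_succ j with rfl | ⟨l, rfl⟩
      · exact absurd hij (by simp [Fin.lt_def])
      · rw [Fin.cons_succ] at hx
        rcases Fin.eq_zero_or_eq_succ i with rfl | ⟨k, rfl⟩
        · have hxB : x ∈ B := hT'sub l hx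
          obtain ⟨u, huS, hadj⟩ := hdom x hxB
          exact ⟨u, by rw [Fin.cons_zero]; exact huS, hadj⟩
        · have hkl : k < l := by rwa [Fin.succ_lt_succ_iff] at hij
          obtain ⟨u, huT, hadj⟩ := hT'.2.2.2 k l hkl x hx
          exact ⟨u, by rw [Fin.cons_succ]; exact huT, hadj⟩
    · intro i
      rcases Fin.eq_zero_or_eq_succ i with rfl | ⟨k, rfl⟩
      · rw [Fin.cons_zero]; exact Finset.coe_subset.2 hSA
      · rw [Fin.cons_succ]
        exact (hT'sub k).trans (Finset.coe_subset.2 hBA)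

end DomKtAux

/-- For t ≥ 2, every non-empty graph with average degree at least 2^(t-2) contains a
dominating K_t-model. -/
theorem hasDomKtModel_of_average_degree {V : Type*} [Fintype V] [Nonempty V]
    (G : SimpleGraph V) (t : ℕ) (ht : 2 ≤ t)
    (h : (2 : ℝ) ^ (t - 2) ≤ 2 * G.edgeSet.ncard / Fintype.card V) :
    G.HasDomKtModel t := by
  classical
  obtain ⟨s, rfl⟩ : ∃ s, t = s + 2 := ⟨t - 2, by omega⟩
  have hs : s + 2 - 2 = s := by omega
  rw [hs] at h
  have hn : 0 < (Fintype.card V : ℝ) := by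
    exact_mod_cast Fintype.card_pos
  have h' : (2 : ℝ) ^ s * (Fintype.card V : ℝ) ≤ 2 * G.edgeSet.ncard := by
    rw [← le_div_iff₀ hn]
    exact h
  have hnat : 2 ^ s * Fintype.card V ≤ 2 * G.edgeSet.ncard := by
    exact_mod_cast h'
  have hdm : DomKtAux.dm G (Finset.univ : Finset V) = 2 * G.edgeSet.ncard := by
    have h1 : DomKtAux.dm G (Finset.univ : Finset V) = ∑ u, G.degree u := by
      refine Finset.sum_congr rfl fun u _ => ?_
      rw [Finset.inter_univ]
      rfl
    rw [h1, SimpleGraph.sum_degrees_eq_twice_card_edges]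
    congr 1
    rw [Set.ncard_eq_toFinset_card']
    rw [SimpleGraph.edgeFinset_card, Set.toFinset_card]
  obtain ⟨T, hT, -⟩ := DomKtAux.aux G s Finset.univ Finset.univ_nonempty
    (by rw [hdm, Finset.card_univ]; exact hnat)
  exact ⟨T, hT⟩
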